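/- Let n ≥ 2, and let α_{ij} ≥ 0 for 1 ≤ i < j ≤ n with ∑_{i=1}^{n-1} α_{in} > 0. Define the Laplacian L(α) = ∑_{1≤i<j≤n} α_{ij} (e_i - e_j)(e_i - e_j)^T on ℝ^n, and define modified weights α'_{ij} = α_{ij} + α_{in}α_{jn}/(∑_{k=1}^{n-1} α_{kn}) for 1 ≤ i < j ≤ n-1, with α'_{in} = 0. Then L(α) = L(α') + (1/∑_{i=1}^{n-1} α_{in}) · v v^T, where v = ∑_{i=1}^{n-1} α_{in}(e_i - e_n). -/

import Mathlib

open Matrix BigOperators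

/-- The standard basis vector difference `e_i - e_j` in `ℝ^n`. -/
noncomputable def wvec {n : ℕ} (i j : Fin n) : Fin n → ℝ :=
  Pi.single i 1 - Pi.single j 1

/-- The Laplacian of the weighted graph with edge weights `α i j` for `i < j`. -/
noncomputable def Lap {n : ℕ} (α : Fin n → Fin n → ℝ) : Matrix (Fin n) (Fin n) ℝ :=
  ∑ i, ∑ j, if i < j then α i j • Matrix.vecMulVec (wvec i j) (wvec i j) else 0

lemma symmsum {m : ℕ} (f : Fin m → Fin m → ℝ) (hsym : ∀ i j, f i j = f j i)
    (hdiag : ∀ i, f i i = 0) :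
    2 * (∑ i, ∑ j, if i < j then f i j else 0) = ∑ i, ∑ j, f i j := by
  have key : ∀ i j : Fin m, f i j
      = (if i < j then f i j else 0) + (if j < i then f i j else 0) := by
    intro i j
    rcases lt_trichotomy i j with h | h | h
    · simp [h, asymm h]
    · simp [h, hdiag]
    · simp [h, asymm h, not_lt.mpr h.le]
  have h2 : (∑ i, ∑ j, if j < i then f i j else 0)
      = ∑ i, ∑ j, if i < j then f i j else 0 := by
    rw [Finset.sum_comm]
    refine Finset.sum_congr rfl fun i _ => Finset.sum_congr rfl fun j _ => ?_
    rw [hsym]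
  calc 2 * (∑ i, ∑ j, if i < j then f i j else 0)
      = (∑ i, ∑ j, if i < j then f i j else 0)
        + (∑ i, ∑ j, if j < i then f i j else 0) := by rw [h2]; ring
    _ = ∑ i, ∑ j, ((if i < j then f i j else 0) + (if j < i then f i j else 0)) := by
        rw [← Finset.sum_add_distrib]
        exact Finset.sum_congr rfl fun i _ => (Finset.sum_add_distrib).symm
    _ = ∑ i, ∑ j, f i j := by
        exact Finset.sum_congr rfl fun i _ => Finset.sum_congr rfl fun j _ => (key i j).symm

lemma keysum {m : ℕ} (a u t : Fin m → ℝ) (s : ℝ) (hs : s ≠ 0)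
    (hsum : ∑ i, a i = s) :
    ∑ i, a i * (u i * t i)
      = (∑ i, ∑ j, if i < j then (a i * a j / s) * ((u i - u j) * (t i - t j)) else 0)
        + 1 / s * ((∑ i, a i * u i) * (∑ i, a i * t i)) := by
  set T := ∑ i, a i * (u i * t i) with hT
  set Pu := ∑ i, a i * u i with hPu
  set Pt := ∑ i, a i * t i with hPt
  set f : Fin m → Fin m → ℝ := fun i j => a i * a j * ((u i - u j) * (t i - t j)) with hf
  have hinner : ∀ i, ∑ j, f i j
      = (a i * (u i * t i)) * s + a i * T - (a i * u i) * Pt - (a i * t i) * Pu := by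
    intro i
    calc ∑ j, f i j
        = ∑ j, ((a i * (u i * t i)) * a j + a i * (a j * (u j * t j))
            - (a i * u i) * (a j * t j) - (a i * t i) * (a j * u j)) :=
          Finset.sum_congr rfl fun j _ => by simp only [hf]; ring
      _ = _ := by
          rw [Finset.sum_sub_distrib, Finset.sum_sub_distrib, Finset.sum_add_distrib,
            ← Finset.mul_sum, ← Finset.mul_sum, ← Finset.mul_sum, ← Finset.mul_sum,
            hsum, ← hT, ← hPu, ← hPt]
  have hF : (∑ i, ∑ j, f i j) = 2 * s * T - 2 * (Pu * Pt) := by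
    calc (∑ i, ∑ j, f i j)
        = ∑ i, ((a i * (u i * t i)) * s + a i * T - (a i * u i) * Pt - (a i * t i) * Pu) :=
          Finset.sum_congr rfl fun i _ => hinner i
      _ = T * s + s * T - Pu * Pt - Pt * Pu := by
          rw [Finset.sum_sub_distrib, Finset.sum_sub_distrib, Finset.sum_add_distrib,
            ← Finset.sum_mul, ← Finset.sum_mul, ← Finset.sum_mul, ← Finset.sum_mul,
            hsum, ← hT, ← hPu, ← hPt]
      _ = 2 * s * T - 2 * (Pu * Pt) := by ring
  have hS : 2 * (∑ i, ∑ j, if i < j then (a i * a j / s) * ((u i - u j) * (t i - t j)) else 0)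
      = 1 / s * (2 * s * T - 2 * (Pu * Pt)) := by
    have : ∀ i j : Fin m, (a i * a j / s) * ((u i - u j) * (t i - t j)) = 1 / s * f i j := by
      intro i j; simp only [hf]; ring
    calc 2 * (∑ i, ∑ j, if i < j then (a i * a j / s) * ((u i - u j) * (t i - t j)) else 0)
        = 2 * (∑ i, ∑ j, if i < j then 1 / s * f i j else 0) := by
          congr 1
          exact Finset.sum_congr rfl fun i _ => Finset.sum_congr rfl fun j _ => by
            rw [this]
      _ = 1 / s * (2 * (∑ i, ∑ j, if i < j then f i j else 0)) := by
          have h0 : (∑ i, ∑ j, if i < j then 1 / s * f i j else 0)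
              = 1 / s * ∑ i, ∑ j, if i < j then f i j else 0 := by
            rw [Finset.mul_sum]
            refine Finset.sum_congr rfl fun i _ => ?_
            rw [Finset.mul_sum]
            exact Finset.sum_congr rfl fun j _ => by split <;> simp
          rw [h0]; ring
      _ = 1 / s * (∑ i, ∑ j, f i j) := by
          rw [symmsum f (fun i j => by simp only [hf]; ring) (fun i => by simp only [hf]; ring)]
      _ = _ := by rw [hF]
  have := hS
  field_simp at this ⊢
  linarith [this]

theorem stmt0 (n : ℕ) (hn : 1 ≤ n) (α : Fin (n+1) → Fin (n+1) → ℝ)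
    (hα : ∀ i j : Fin (n+1), i < j → 0 ≤ α i j)
    (hs : 0 < ∑ i : Fin n, α i.castSucc (Fin.last n))
    (α' : Fin (n+1) → Fin (n+1) → ℝ)
    (hα' : ∀ i j : Fin n, i < j → α' i.castSucc j.castSucc
      = α i.castSucc j.castSucc +
        α i.castSucc (Fin.last n) * α j.castSucc (Fin.last n) /
          ∑ k : Fin n, α k.castSucc (Fin.last n))
    (hα'0 : ∀ i : Fin n, α' i.castSucc (Fin.last n) = 0) :
    Lap α = Lap α' + (1 / ∑ i : Fin n, α i.castSucc (Fin.last n)) •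
      Matrix.vecMulVec (∑ i : Fin n, α i.castSucc (Fin.last n) • wvec i.castSucc (Fin.last n))
                       (∑ i : Fin n, α i.castSucc (Fin.last n) • wvec i.castSucc (Fin.last n)) := by
  set N := Fin.last n with hN
  set s := ∑ i : Fin n, α i.castSucc N with hsdef
  have hsne : s ≠ 0 := ne_of_gt hs
  ext x y
  have lap_apply : ∀ (β : Fin (n+1) → Fin (n+1) → ℝ), Lap β x y
      = ∑ i, ∑ j, if i < j then β i j * (wvec i j x * wvec i j y) else 0 := by
    intro β
    simp [Lap, Matrix.sum_apply, apply_ite (fun M : Matrix (Fin (n+1)) (Fin (n+1)) ℝ => M x y),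
      Matrix.vecMulVec_apply, smul_eq_mul, mul_assoc]
  have split : ∀ (β : Fin (n+1) → Fin (n+1) → ℝ), Lap β x y
      = (∑ i : Fin n, ∑ j : Fin n, if i < j then β i.castSucc j.castSucc *
            (wvec i.castSucc j.castSucc x * wvec i.castSucc j.castSucc y) else 0)
        + ∑ i : Fin n, β i.castSucc N * (wvec i.castSucc N x * wvec i.castSucc N y) := by
    intro β
    rw [lap_apply β]
    rw [Fin.sum_univ_castSucc
      (f := fun i => ∑ j, if i < j then β i j * (wvec i j x * wvec i j y) else 0)]
    have h1 : ∀ j : Fin (n+1), ¬ (N < j) := fun j => not_lt.mpr (Fin.le_last j)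
    simp only [Fin.sum_univ_castSucc, Fin.castSucc_lt_castSucc_iff, Fin.castSucc_lt_last,
      h1, if_true, if_false, Finset.sum_const_zero, add_zero, Finset.sum_add_distrib, hN,
      (fun j => not_lt.mpr (Fin.le_last j) : ∀ j : Fin (n+1), ¬ Fin.last n < j)]
  have wd : ∀ (i j : Fin n) (z : Fin (n+1)),
      wvec i.castSucc j.castSucc z = wvec i.castSucc N z - wvec j.castSucc N z := by
    intro i j z; simp only [wvec, Pi.sub_apply]; ring
  rw [Matrix.add_apply, Matrix.smul_apply, Matrix.vecMulVec_apply, split α, split α',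
    smul_eq_mul]
  have hv : ∀ z, (∑ i : Fin n, α i.castSucc N • wvec i.castSucc N) z
      = ∑ i : Fin n, α i.castSucc N * wvec i.castSucc N z := by
    intro z; simp [Finset.sum_apply]
  rw [hv x, hv y]
  have h0 : (∑ i : Fin n, α' i.castSucc N * (wvec i.castSucc N x * wvec i.castSucc N y)) = 0 := by
    simp [hα'0]
  rw [h0, add_zero]
  have hsplit' : (∑ i : Fin n, ∑ j : Fin n, if i < j then α' i.castSucc j.castSucc *
        (wvec i.castSucc j.castSucc x * wvec i.castSucc j.castSucc y) else 0)
      = (∑ i : Fin n, ∑ j : Fin n, if i < j then α i.castSucc j.castSucc *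
          (wvec i.castSucc j.castSucc x * wvec i.castSucc j.castSucc y) else 0)
        + (∑ i : Fin n, ∑ j : Fin n, if i < j then
            (α i.castSucc N * α j.castSucc N / s) *
            ((wvec i.castSucc N x - wvec j.castSucc N x) *
             (wvec i.castSucc N y - wvec j.castSucc N y)) else 0) := by
    rw [← Finset.sum_add_distrib]
    refine Finset.sum_congr rfl fun i _ => ?_
    rw [← Finset.sum_add_distrib]
    refine Finset.sum_congr rfl fun j _ => ?_
    by_cases h : i < j
    · simp only [h, if_true, hα' i j h, ← wd i j x, ← wd i j y]; ring
    · simp [h]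
  rw [hsplit']
  have hkey := keysum (fun i => α i.castSucc N) (fun i => wvec i.castSucc N x)
    (fun i => wvec i.castSucc N y) s hsne hsdef.symm
  linarith [hkey]
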